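/- Let B_1, …, B_{d+1} be a complete set of d+1 orthonormal bases of ℂ^d that are pairwise mutually unbiased (|⟨i_m, j_n⟩|² = 1/d for m ≠ n). Then for every unit vector ψ, with p_m(i) = |⟨i_m, ψ⟩|², one has the exact equality Σ_{m=1}^{d+1} Σ_{i=1}^{d} p_m(i)² = 2; equivalently, the average fidelity-based disturbance satisfies (1/(d+1)) Σ_{m=1}^{d+1} (1 − Σ_i p_m(i)²) = (1 − 1/(d+1))(1 − 1/d) exactly. -/

import Mathlib

set_option maxHeartbeats 1000000

open Matrix Finset Complex

namespace MUB7

variable {d : ℕ}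

abbrev I4 (d : ℕ) := Fin d × Fin d × Fin d × Fin d
abbrev Q2 (d : ℕ) := Fin (d + 1) × Fin d

lemma prod2 {α β : Type*} [Fintype α] [Fintype β] (X : α → ℂ) (R : β → ℂ) :
    ∑ x : α × β, X x.1 * R x.2 = (∑ a, X a) * (∑ b, R b) := by
  rw [Fintype.sum_prod_type, ← Finset.sum_mul_sum]

lemma prod4 (X Y Z W : Fin d → ℂ) :
    ∑ x : Fin d × Fin d × Fin d × Fin d, X x.1 * Y x.2.1 * Z x.2.2.1 * W x.2.2.2
      = (∑ a, X a) * (∑ b, Y b) * (∑ k, Z k) * (∑ l, W l) := by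
  have h2 : ∀ (Z W : Fin d → ℂ), ∑ z : Fin d × Fin d, Z z.1 * W z.2
      = (∑ k, Z k) * (∑ l, W l) := fun Z W => prod2 Z W
  have h3 : ∑ y : Fin d × Fin d × Fin d, Y y.1 * (Z y.2.1 * W y.2.2)
      = (∑ b, Y b) * ((∑ k, Z k) * (∑ l, W l)) := by
    rw [prod2 Y (fun z : Fin d × Fin d => Z z.1 * W z.2), h2]
  calc ∑ x : Fin d × Fin d × Fin d × Fin d, X x.1 * Y x.2.1 * Z x.2.2.1 * W x.2.2.2
      = ∑ x : Fin d × (Fin d × Fin d × Fin d),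
          X x.1 * (Y x.2.1 * (Z x.2.2.1 * W x.2.2.2)) := by
        apply Finset.sum_congr rfl; intros; ring
    _ = (∑ a, X a) * ∑ y : Fin d × Fin d × Fin d, Y y.1 * (Z y.2.1 * W y.2.2) :=
        prod2 X (fun y : Fin d × Fin d × Fin d => Y y.1 * (Z y.2.1 * W y.2.2))
    _ = (∑ a, X a) * (∑ b, Y b) * (∑ k, Z k) * (∑ l, W l) := by rw [h3]; ring

noncomputable def mterm (B : Fin (d+1) → Fin d → Fin d → ℂ) (q : Q2 d) (x : I4 d) : ℂ :=
  B q.1 q.2 x.1 * (starRingEnd ℂ) (B q.1 q.2 x.2.1) *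
    (starRingEnd ℂ) (B q.1 q.2 x.2.2.1) * B q.1 q.2 x.2.2.2

noncomputable def Gg (B : Fin (d+1) → Fin d → Fin d → ℂ) (x : I4 d) : ℂ :=
  ∑ q : Q2 d, mterm B q x

def ee (x : I4 d) : ℂ := if x.1 = x.2.2.1 ∧ x.2.1 = x.2.2.2 then 1 else 0
def tt (x : I4 d) : ℂ := if x.1 = x.2.1 ∧ x.2.2.1 = x.2.2.2 then 1 else 0
def sw (x : I4 d) : I4 d := (x.2.2.1, x.2.2.2, x.1, x.2.1)

noncomputable def Ff (B : Fin (d+1) → Fin d → Fin d → ℂ) (x : I4 d) : ℂ :=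
  Gg B x - ee x - tt x

noncomputable def inn (B : Fin (d+1) → Fin d → Fin d → ℂ) (q r : Q2 d) : ℂ :=
  ∑ a, (starRingEnd ℂ) (B q.1 q.2 a) * B r.1 r.2 a

lemma collapse_ee (f : I4 d → ℂ) :
    ∑ x : I4 d, f x * ee x = ∑ p : Fin d × Fin d, f (p.1, p.2, p.1, p.2) := by
  simp only [ee, mul_ite, mul_one, mul_zero, ite_and]
  simp [Fintype.sum_prod_type, Finset.sum_ite_eq, Finset.sum_ite_eq']

lemma collapse_tt (f : I4 d → ℂ) :
    ∑ x : I4 d, f x * tt x = ∑ p : Fin d × Fin d, f (p.1, p.1, p.2, p.2) := by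
  simp only [tt, mul_ite, mul_one, mul_zero, ite_and]
  simp [Fintype.sum_prod_type, Finset.sum_ite_eq, Finset.sum_ite_eq']

lemma sum_conj_fst (B : Fin (d+1) → Fin d → Fin d → ℂ) (q r : Q2 d) :
    ∑ a, B q.1 q.2 a * (starRingEnd ℂ) (B r.1 r.2 a) = (starRingEnd ℂ) (inn B q r) := by
  rw [inn, map_sum]
  exact Finset.sum_congr rfl fun a _ => by
    rw [_root_.map_mul, Complex.conj_conj]

lemma pair (B : Fin (d+1) → Fin d → Fin d → ℂ) (q r : Q2 d) :
    ∑ x : I4 d, mterm B q x * mterm B r (sw x)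
      = (inn B q r * (starRingEnd ℂ) (inn B q r)) ^ 2 := by
  calc ∑ x : I4 d, mterm B q x * mterm B r (sw x)
      = ∑ x : I4 d, (fun a => B q.1 q.2 a * (starRingEnd ℂ) (B r.1 r.2 a)) x.1 *
          (fun b => (starRingEnd ℂ) (B q.1 q.2 b) * B r.1 r.2 b) x.2.1 *
          (fun k => (starRingEnd ℂ) (B q.1 q.2 k) * B r.1 r.2 k) x.2.2.1 *
          (fun l => B q.1 q.2 l * (starRingEnd ℂ) (B r.1 r.2 l)) x.2.2.2 := by
        apply Finset.sum_congr rfl; intro x _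
        simp only [mterm, sw]
        ring
    _ = (∑ a, B q.1 q.2 a * (starRingEnd ℂ) (B r.1 r.2 a)) *
        (∑ b, (starRingEnd ℂ) (B q.1 q.2 b) * B r.1 r.2 b) *
        (∑ k, (starRingEnd ℂ) (B q.1 q.2 k) * B r.1 r.2 k) *
        (∑ l, B q.1 q.2 l * (starRingEnd ℂ) (B r.1 r.2 l)) :=
        prod4 (fun a => B q.1 q.2 a * (starRingEnd ℂ) (B r.1 r.2 a))
          (fun b => (starRingEnd ℂ) (B q.1 q.2 b) * B r.1 r.2 b)
          (fun k => (starRingEnd ℂ) (B q.1 q.2 k) * B r.1 r.2 k)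
          (fun l => B q.1 q.2 l * (starRingEnd ℂ) (B r.1 r.2 l))
    _ = (inn B q r * (starRingEnd ℂ) (inn B q r)) ^ 2 := by
        rw [sum_conj_fst]
        show (starRingEnd ℂ) (inn B q r) * inn B q r * inn B q r *
          (starRingEnd ℂ) (inn B q r) = _
        ring

lemma pairPsi (B : Fin (d+1) → Fin d → Fin d → ℂ) (ψ : Fin d → ℂ) (q : Q2 d)
    (c : ℂ) (hc : c = ∑ a, (starRingEnd ℂ) (B q.1 q.2 a) * ψ a) :
    ∑ x : I4 d, mterm B q x *
      ((starRingEnd ℂ) (ψ x.1) * ψ x.2.1 * ψ x.2.2.1 * (starRingEnd ℂ) (ψ x.2.2.2))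
      = (c * (starRingEnd ℂ) c) ^ 2 := by
  have hcc : (starRingEnd ℂ) c = ∑ a, B q.1 q.2 a * (starRingEnd ℂ) (ψ a) := by
    rw [hc, map_sum]
    exact Finset.sum_congr rfl fun a _ => by
      rw [_root_.map_mul, Complex.conj_conj]
  calc ∑ x : I4 d, mterm B q x *
        ((starRingEnd ℂ) (ψ x.1) * ψ x.2.1 * ψ x.2.2.1 * (starRingEnd ℂ) (ψ x.2.2.2))
      = ∑ x : I4 d, (fun a => B q.1 q.2 a * (starRingEnd ℂ) (ψ a)) x.1 *
          (fun b => (starRingEnd ℂ) (B q.1 q.2 b) * ψ b) x.2.1 *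
          (fun k => (starRingEnd ℂ) (B q.1 q.2 k) * ψ k) x.2.2.1 *
          (fun l => B q.1 q.2 l * (starRingEnd ℂ) (ψ l)) x.2.2.2 := by
        apply Finset.sum_congr rfl; intro x _
        simp only [mterm]
        ring
    _ = (∑ a, B q.1 q.2 a * (starRingEnd ℂ) (ψ a)) *
        (∑ b, (starRingEnd ℂ) (B q.1 q.2 b) * ψ b) *
        (∑ k, (starRingEnd ℂ) (B q.1 q.2 k) * ψ k) *
        (∑ l, B q.1 q.2 l * (starRingEnd ℂ) (ψ l)) :=
        prod4 (fun a => B q.1 q.2 a * (starRingEnd ℂ) (ψ a))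
          (fun b => (starRingEnd ℂ) (B q.1 q.2 b) * ψ b)
          (fun k => (starRingEnd ℂ) (B q.1 q.2 k) * ψ k)
          (fun l => B q.1 q.2 l * (starRingEnd ℂ) (ψ l))
    _ = (c * (starRingEnd ℂ) c) ^ 2 := by rw [← hcc, ← hc]; ring

lemma bigsum_exchange (B : Fin (d+1) → Fin d → Fin d → ℂ) :
    ∑ x : I4 d, Gg B x * Gg B (sw x)
      = ∑ q : Q2 d, ∑ r : Q2 d, (inn B q r * (starRingEnd ℂ) (inn B q r)) ^ 2 := by
  have h1 : ∀ x : I4 d, Gg B x * Gg B (sw x)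
      = ∑ q : Q2 d, ∑ r : Q2 d, mterm B q x * mterm B r (sw x) := by
    intro x; rw [Gg, Gg, Finset.sum_mul_sum]
  calc ∑ x : I4 d, Gg B x * Gg B (sw x)
      = ∑ x : I4 d, ∑ q : Q2 d, ∑ r : Q2 d, mterm B q x * mterm B r (sw x) :=
        Finset.sum_congr rfl fun x _ => h1 x
    _ = ∑ q : Q2 d, ∑ x : I4 d, ∑ r : Q2 d, mterm B q x * mterm B r (sw x) :=
        Finset.sum_comm
    _ = ∑ q : Q2 d, ∑ r : Q2 d, ∑ x : I4 d, mterm B q x * mterm B r (sw x) :=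
        Finset.sum_congr rfl fun q _ => Finset.sum_comm
    _ = ∑ q : Q2 d, ∑ r : Q2 d, (inn B q r * (starRingEnd ℂ) (inn B q r)) ^ 2 :=
        Finset.sum_congr rfl fun q _ => Finset.sum_congr rfl fun r _ => pair B q r

lemma bigsum (B : Fin (d+1) → Fin d → Fin d → ℂ)
    (hinn1 : ∀ (m : Fin (d+1)) (i j : Fin d),
      inn B (m, i) (m, j) = if i = j then 1 else 0)
    (hinn2 : ∀ q r : Q2 d, q.1 ≠ r.1 →
      inn B q r * (starRingEnd ℂ) (inn B q r) = 1 / (d : ℂ))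
    (hd : (d : ℂ) ≠ 0) :
    ∑ x : I4 d, Gg B x * Gg B (sw x) = 2 * d * (d + 1) := by
  rw [bigsum_exchange B]
  have hval : ∀ q r : Q2 d, (inn B q r * (starRingEnd ℂ) (inn B q r)) ^ 2
      = if q.1 = r.1 then (if q.2 = r.2 then 1 else 0) else (1 / (d : ℂ)) ^ 2 := by
    intro q r
    by_cases h : q.1 = r.1
    · have : inn B q r = if q.2 = r.2 then 1 else 0 := by
        obtain ⟨m, i⟩ := q; obtain ⟨n, j⟩ := r
        simp only at h; subst h; exact hinn1 m i j
      rw [this, if_pos h]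
      split_ifs <;> simp
    · rw [hinn2 q r h, if_neg h]
  calc ∑ q : Q2 d, ∑ r : Q2 d, (inn B q r * (starRingEnd ℂ) (inn B q r)) ^ 2
      = ∑ q : Q2 d, ∑ r : Q2 d,
          (if q.1 = r.1 then (if q.2 = r.2 then (1:ℂ) else 0) else (1 / (d : ℂ)) ^ 2) :=
        Finset.sum_congr rfl fun q _ => Finset.sum_congr rfl fun r _ => hval q r
    _ = ∑ q : Q2 d, ((1 : ℂ) + d * (d * (1 / (d:ℂ)) ^ 2)) := by
        apply Finset.sum_congr rfl; intro q _
        rw [Fintype.sum_prod_type]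
        have hrow : ∀ n : Fin (d+1), ∑ j : Fin d,
            (if q.1 = n then (if q.2 = j then (1:ℂ) else 0) else (1 / (d : ℂ)) ^ 2)
            = if q.1 = n then 1 else d * (1 / (d:ℂ)) ^ 2 := by
          intro n
          by_cases h : q.1 = n
          · simp [h, Finset.sum_ite_eq, Finset.sum_ite_eq']
          · simp [h, Finset.sum_const, Finset.card_univ, nsmul_eq_mul]
        rw [Finset.sum_congr rfl fun n _ => hrow n]
        have : ∀ n : Fin (d+1), (if q.1 = n then (1:ℂ) else d * (1 / (d:ℂ)) ^ 2)
            = d * (1 / (d:ℂ)) ^ 2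
              + (if q.1 = n then 1 - d * (1 / (d:ℂ)) ^ 2 else 0) := by
          intro n; split_ifs <;> ring
        rw [Finset.sum_congr rfl fun n _ => this n, Finset.sum_add_distrib,
          Finset.sum_const, Finset.sum_ite_eq, Finset.card_univ]
        simp [Fintype.card_fin, nsmul_eq_mul]
        ring
    _ = 2 * d * (d + 1) := by
        rw [Finset.sum_const, Finset.card_univ]
        simp only [Fintype.card_prod, Fintype.card_fin, nsmul_eq_mul]
        have h1 : (1 : ℂ) + d * (d * (1 / (d:ℂ)) ^ 2) = 2 := by field_simp; ring
        rw [h1]; push_cast; ring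

section diag
variable (B : Fin (d+1) → Fin d → Fin d → ℂ)
variable (hinn1 : ∀ (m : Fin (d+1)) (i j : Fin d),
      inn B (m, i) (m, j) = if i = j then 1 else 0)

include hinn1

lemma inn_self (q : Q2 d) : inn B q q = 1 := by
  have := hinn1 q.1 q.2 q.2
  simpa using this

lemma gdiag_ee : ∑ p : Fin d × Fin d, Gg B (p.1, p.2, p.1, p.2) = (d + 1) * d := by
  simp only [Gg]
  rw [Finset.sum_comm]
  have hq : ∀ q : Q2 d, ∑ p : Fin d × Fin d, mterm B q (p.1, p.2, p.1, p.2) = 1 := by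
    intro q
    have : ∑ p : Fin d × Fin d, mterm B q (p.1, p.2, p.1, p.2)
        = ∑ p : Fin d × Fin d,
            (fun a => B q.1 q.2 a * (starRingEnd ℂ) (B q.1 q.2 a)) p.1 *
            (fun b => (starRingEnd ℂ) (B q.1 q.2 b) * B q.1 q.2 b) p.2 := by
      apply Finset.sum_congr rfl; intro p _; simp only [mterm]; ring
    rw [this, prod2 (fun a => B q.1 q.2 a * (starRingEnd ℂ) (B q.1 q.2 a))
      (fun b => (starRingEnd ℂ) (B q.1 q.2 b) * B q.1 q.2 b),
      sum_conj_fst B q q]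
    have h2 : (∑ b, (starRingEnd ℂ) (B q.1 q.2 b) * B q.1 q.2 b) = inn B q q := rfl
    rw [h2, inn_self B hinn1 q]
    simp
  rw [show (∑ q : Q2 d, ∑ p : Fin d × Fin d, mterm B q (p.1, p.2, p.1, p.2))
      = ∑ q : Q2 d, (1:ℂ) from Finset.sum_congr rfl fun q _ => hq q]
  rw [Finset.sum_const, Finset.card_univ]
  simp [Fintype.card_prod, Fintype.card_fin, nsmul_eq_mul]

lemma gdiag_tt : ∑ p : Fin d × Fin d, Gg B (p.1, p.1, p.2, p.2) = (d + 1) * d := by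
  simp only [Gg]
  rw [Finset.sum_comm]
  have hq : ∀ q : Q2 d, ∑ p : Fin d × Fin d, mterm B q (p.1, p.1, p.2, p.2) = 1 := by
    intro q
    have : ∑ p : Fin d × Fin d, mterm B q (p.1, p.1, p.2, p.2)
        = ∑ p : Fin d × Fin d,
            (fun a => B q.1 q.2 a * (starRingEnd ℂ) (B q.1 q.2 a)) p.1 *
            (fun b => (starRingEnd ℂ) (B q.1 q.2 b) * B q.1 q.2 b) p.2 := by
      apply Finset.sum_congr rfl; intro p _; simp only [mterm]; ring
    rw [this, prod2 (fun a => B q.1 q.2 a * (starRingEnd ℂ) (B q.1 q.2 a))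
      (fun b => (starRingEnd ℂ) (B q.1 q.2 b) * B q.1 q.2 b),
      sum_conj_fst B q q]
    have h2 : (∑ b, (starRingEnd ℂ) (B q.1 q.2 b) * B q.1 q.2 b) = inn B q q := rfl
    rw [h2, inn_self B hinn1 q]
    simp
  rw [show (∑ q : Q2 d, ∑ p : Fin d × Fin d, mterm B q (p.1, p.1, p.2, p.2))
      = ∑ q : Q2 d, (1:ℂ) from Finset.sum_congr rfl fun q _ => hq q]
  rw [Finset.sum_const, Finset.card_univ]
  simp [Fintype.card_prod, Fintype.card_fin, nsmul_eq_mul]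

lemma gdiag_tt' : ∑ p : Fin d × Fin d, Gg B (p.2, p.2, p.1, p.1) = (d + 1) * d := by
  have h : ∑ p : Fin d × Fin d, Gg B (p.2, p.2, p.1, p.1)
      = ∑ p : Fin d × Fin d, Gg B (p.1, p.1, p.2, p.2) := by
    rw [Fintype.sum_prod_type, Fintype.sum_prod_type]
    exact Finset.sum_comm
  rw [h]
  exact gdiag_tt B hinn1

end diag

lemma ee_sw (x : I4 d) : ee (sw x) = ee x := by
  simp only [ee, sw]
  exact if_congr ⟨fun h => ⟨h.1.symm, h.2.symm⟩, fun h => ⟨h.1.symm, h.2.symm⟩⟩ rfl rfl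

lemma tt_sw (x : I4 d) : tt (sw x) = tt x := by
  simp only [tt, sw]
  exact if_congr ⟨fun h => ⟨h.2, h.1⟩, fun h => ⟨h.2, h.1⟩⟩ rfl rfl

lemma conj_Gg (B : Fin (d+1) → Fin d → Fin d → ℂ) (x : I4 d) :
    (starRingEnd ℂ) (Gg B x) = Gg B (sw x) := by
  rw [Gg, map_sum]
  apply Finset.sum_congr rfl; intro q _
  simp only [mterm, sw, _root_.map_mul, Complex.conj_conj]
  ring

lemma conj_ee (x : I4 d) : (starRingEnd ℂ) (ee x) = ee x := by
  simp [ee, apply_ite]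

lemma conj_tt (x : I4 d) : (starRingEnd ℂ) (tt x) = tt x := by
  simp [tt, apply_ite]

lemma conj_Ff (B : Fin (d+1) → Fin d → Fin d → ℂ) (x : I4 d) :
    (starRingEnd ℂ) (Ff B x) = Ff B (sw x) := by
  simp only [Ff, map_sub, conj_Gg, conj_ee, conj_tt, ee_sw, tt_sw]

-- the pure delta sums
lemma ee_ee_sum : ∑ x : I4 d, ee x * ee x = (d : ℂ) * d := by
  rw [collapse_ee ee]
  have : ∀ p : Fin d × Fin d, ee (p.1, p.2, p.1, p.2) = 1 := by
    intro p; simp [ee]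
  rw [Finset.sum_congr rfl fun p _ => this p, Finset.sum_const, Finset.card_univ]
  simp [Fintype.card_prod, Fintype.card_fin, nsmul_eq_mul]

lemma tt_ee_sum : ∑ x : I4 d, tt x * ee x = (d : ℂ) := by
  rw [collapse_ee tt]
  have : ∀ p : Fin d × Fin d, tt (p.1, p.2, p.1, p.2)
      = if p.1 = p.2 then 1 else 0 := by
    intro p; simp [tt]
  rw [Finset.sum_congr rfl fun p _ => this p, Fintype.sum_prod_type]
  simp [Finset.sum_ite_eq, Finset.sum_ite_eq']

lemma ee_tt_sum : ∑ x : I4 d, ee x * tt x = (d : ℂ) := by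
  rw [collapse_tt ee]
  have : ∀ p : Fin d × Fin d, ee (p.1, p.1, p.2, p.2)
      = if p.1 = p.2 then 1 else 0 := by
    intro p; simp [ee]
  rw [Finset.sum_congr rfl fun p _ => this p, Fintype.sum_prod_type]
  simp [Finset.sum_ite_eq, Finset.sum_ite_eq']

lemma tt_tt_sum : ∑ x : I4 d, tt x * tt x = (d : ℂ) * d := by
  rw [collapse_tt tt]
  have : ∀ p : Fin d × Fin d, tt (p.1, p.1, p.2, p.2) = 1 := by
    intro p; simp [tt]
  rw [Finset.sum_congr rfl fun p _ => this p, Finset.sum_const, Finset.card_univ]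
  simp [Fintype.card_prod, Fintype.card_fin, nsmul_eq_mul]

lemma T0 (B : Fin (d+1) → Fin d → Fin d → ℂ)
    (hinn1 : ∀ (m : Fin (d+1)) (i j : Fin d),
      inn B (m, i) (m, j) = if i = j then 1 else 0)
    (hinn2 : ∀ q r : Q2 d, q.1 ≠ r.1 →
      inn B q r * (starRingEnd ℂ) (inn B q r) = 1 / (d : ℂ))
    (hd : (d : ℂ) ≠ 0) :
    ∑ x : I4 d, Ff B x * Ff B (sw x) = 0 := by
  have hx : ∀ x : I4 d, Ff B x * Ff B (sw x)
      = Gg B x * Gg B (sw x)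
        - ((fun y => Gg B (sw y)) x * ee x + (fun y => Gg B (sw y)) x * tt x
          + (Gg B x * ee x + Gg B x * tt x))
        + (ee x * ee x + tt x * ee x + (ee x * tt x + tt x * tt x)) := by
    intro x
    have h2 : Ff B (sw x) = Gg B (sw x) - ee x - tt x := by
      rw [Ff, ee_sw, tt_sw]
    rw [Ff, h2]; ring
  rw [Finset.sum_congr rfl fun x _ => hx x]
  simp only [Finset.sum_add_distrib, Finset.sum_sub_distrib]
  rw [bigsum B hinn1 hinn2 hd, collapse_ee (fun y => Gg B (sw y)),
    collapse_tt (fun y => Gg B (sw y)), collapse_ee (Gg B), collapse_tt (Gg B),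
    ee_ee_sum, tt_ee_sum, ee_tt_sum, tt_tt_sum]
  have c1 : ∑ p : Fin d × Fin d, Gg B (sw (p.1, p.2, p.1, p.2)) = (d+1) * d := by
    have : ∀ p : Fin d × Fin d, sw ((p.1, p.2, p.1, p.2) : I4 d)
        = (p.1, p.2, p.1, p.2) := fun p => rfl
    rw [Finset.sum_congr rfl fun p _ => by rw [this p]]
    exact gdiag_ee B hinn1
  have c2 : ∑ p : Fin d × Fin d, Gg B (sw (p.1, p.1, p.2, p.2)) = (d+1) * d := by
    have : ∀ p : Fin d × Fin d, sw ((p.1, p.1, p.2, p.2) : I4 d)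
        = (p.2, p.2, p.1, p.1) := fun p => rfl
    rw [Finset.sum_congr rfl fun p _ => by rw [this p]]
    exact gdiag_tt' B hinn1
  rw [c1, c2, gdiag_ee B hinn1, gdiag_tt B hinn1]
  ring

lemma Ff_zero (B : Fin (d+1) → Fin d → Fin d → ℂ)
    (hinn1 : ∀ (m : Fin (d+1)) (i j : Fin d),
      inn B (m, i) (m, j) = if i = j then 1 else 0)
    (hinn2 : ∀ q r : Q2 d, q.1 ≠ r.1 →
      inn B q r * (starRingEnd ℂ) (inn B q r) = 1 / (d : ℂ))
    (hd : (d : ℂ) ≠ 0) (x : I4 d) : Ff B x = 0 := by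
  have h1 : ∀ y : I4 d, Ff B y * Ff B (sw y) = (Complex.normSq (Ff B y) : ℂ) := by
    intro y
    rw [← conj_Ff, Complex.mul_conj]
  have h2 : ((∑ y : I4 d, Complex.normSq (Ff B y) : ℝ) : ℂ) = 0 := by
    push_cast
    rw [← Finset.sum_congr rfl fun y _ => h1 y]
    exact T0 B hinn1 hinn2 hd
  have h3 : ∑ y : I4 d, Complex.normSq (Ff B y) = 0 := by exact_mod_cast h2
  have h4 := (Finset.sum_eq_zero_iff_of_nonneg
    (fun y _ => Complex.normSq_nonneg (Ff B y))).1 h3 x (Finset.mem_univ x)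
  exact Complex.normSq_eq_zero.1 h4

lemma keyC (B : Fin (d+1) → Fin d → Fin d → ℂ)
    (hinn1 : ∀ (m : Fin (d+1)) (i j : Fin d),
      inn B (m, i) (m, j) = if i = j then 1 else 0)
    (hinn2 : ∀ q r : Q2 d, q.1 ≠ r.1 →
      inn B q r * (starRingEnd ℂ) (inn B q r) = 1 / (d : ℂ))
    (hd : (d : ℂ) ≠ 0) (ψ : Fin d → ℂ)
    (hψ : ∑ a, (starRingEnd ℂ) (ψ a) * ψ a = 1) :
    ∑ q : Q2 d, ((∑ a, (starRingEnd ℂ) (B q.1 q.2 a) * ψ a) *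
      (starRingEnd ℂ) (∑ a, (starRingEnd ℂ) (B q.1 q.2 a) * ψ a)) ^ 2 = 2 := by
  set w : I4 d → ℂ := fun x =>
    (starRingEnd ℂ) (ψ x.1) * ψ x.2.1 * ψ x.2.2.1 * (starRingEnd ℂ) (ψ x.2.2.2) with hw
  have hG : ∀ x : I4 d, Gg B x = ee x + tt x := by
    intro x
    have := Ff_zero B hinn1 hinn2 hd x
    rw [Ff] at this
    linear_combination this
  calc ∑ q : Q2 d, ((∑ a, (starRingEnd ℂ) (B q.1 q.2 a) * ψ a) *
        (starRingEnd ℂ) (∑ a, (starRingEnd ℂ) (B q.1 q.2 a) * ψ a)) ^ 2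
      = ∑ q : Q2 d, ∑ x : I4 d, mterm B q x * w x :=
        Finset.sum_congr rfl fun q _ => (pairPsi B ψ q _ rfl).symm
    _ = ∑ x : I4 d, ∑ q : Q2 d, mterm B q x * w x := Finset.sum_comm
    _ = ∑ x : I4 d, Gg B x * w x := by
        apply Finset.sum_congr rfl; intro x _
        rw [Gg, Finset.sum_mul]
    _ = ∑ x : I4 d, (w x * ee x + w x * tt x) := by
        apply Finset.sum_congr rfl; intro x _
        rw [hG x]; ring
    _ = ∑ x : I4 d, w x * ee x + ∑ x : I4 d, w x * tt x := Finset.sum_add_distrib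
    _ = 2 := by
        rw [collapse_ee w, collapse_tt w]
        have e1 : ∑ p : Fin d × Fin d, w (p.1, p.2, p.1, p.2)
            = (∑ a, (starRingEnd ℂ) (ψ a) * ψ a) * (∑ b, ψ b * (starRingEnd ℂ) (ψ b)) := by
          rw [← prod2 (fun a => (starRingEnd ℂ) (ψ a) * ψ a)
            (fun b => ψ b * (starRingEnd ℂ) (ψ b))]
          apply Finset.sum_congr rfl; intro p _
          simp only [hw]; ring
        have e2 : ∑ p : Fin d × Fin d, w (p.1, p.1, p.2, p.2)
            = (∑ a, (starRingEnd ℂ) (ψ a) * ψ a) * (∑ b, ψ b * (starRingEnd ℂ) (ψ b)) := by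
          rw [← prod2 (fun a => (starRingEnd ℂ) (ψ a) * ψ a)
            (fun b => ψ b * (starRingEnd ℂ) (ψ b))]
          apply Finset.sum_congr rfl; intro p _
          simp only [hw]; ring
        have hψ' : ∑ b, ψ b * (starRingEnd ℂ) (ψ b) = 1 := by
          rw [← hψ]
          exact Finset.sum_congr rfl fun b _ => by ring
        rw [e1, e2, hψ, hψ']
        norm_num

end MUB7

/-- For a complete set of `d+1` pairwise mutually unbiased orthonormal
bases of `ℂ^d` and any unit vector `ψ`, with `p_m(i) = |⟨i_m, ψ⟩|²`, one has the exact
equality `∑_{m=1}^{d+1} ∑_i p_m(i)² = 2`; equivalently, the average fidelity-based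
disturbance equals `(1 - 1/(d+1))(1 - 1/d)` exactly. -/
theorem disturbance_equality_complete_mubs {d : ℕ}
    (B : Fin (d + 1) → Fin d → (Fin d → ℂ))
    (hortho : ∀ m, ∀ i j, star (B m i) ⬝ᵥ B m j = if i = j then (1 : ℂ) else 0)
    (hmub : ∀ m n, m ≠ n → ∀ i j,
      ‖star (B m i) ⬝ᵥ B n j‖ ^ 2 = 1 / (d : ℝ))
    (ψ : Fin d → ℂ) (hψ : star ψ ⬝ᵥ ψ = 1) :
    ∑ m, ∑ i, (‖star (B m i) ⬝ᵥ ψ‖ ^ 2) ^ 2 = 2 ∧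
    (1 / ((d : ℝ) + 1)) * ∑ m, (1 - ∑ i, (‖star (B m i) ⬝ᵥ ψ‖ ^ 2) ^ 2)
      = (1 - 1 / ((d : ℝ) + 1)) * (1 - 1 / (d : ℝ)) := by
  have hd0 : d ≠ 0 := by
    rintro rfl
    simp [dotProduct] at hψ
  have hdC : (d : ℂ) ≠ 0 := Nat.cast_ne_zero.2 hd0
  have hdR : (d : ℝ) ≠ 0 := Nat.cast_ne_zero.2 hd0
  have hdot : ∀ u w : Fin d → ℂ, star u ⬝ᵥ w = ∑ a, (starRingEnd ℂ) (u a) * w a := by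
    intro u w
    simp [dotProduct]
  have hinn1 : ∀ (m : Fin (d+1)) (i j : Fin d),
      MUB7.inn B (m, i) (m, j) = if i = j then 1 else 0 := by
    intro m i j
    rw [MUB7.inn]
    dsimp only
    rw [← hdot]
    exact hortho m i j
  have hinn2 : ∀ q r : MUB7.Q2 d, q.1 ≠ r.1 →
      MUB7.inn B q r * (starRingEnd ℂ) (MUB7.inn B q r) = 1 / (d : ℂ) := by
    intro q r hne
    have hz : MUB7.inn B q r = star (B q.1 q.2) ⬝ᵥ B r.1 r.2 := (hdot _ _).symm
    rw [hz, Complex.mul_conj, ← Complex.sq_norm, hmub q.1 r.1 hne q.2 r.2]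
    push_cast
    ring
  have hψ' : ∑ a, (starRingEnd ℂ) (ψ a) * ψ a = 1 := by
    rw [← hdot]; exact hψ
  have key := MUB7.keyC B hinn1 hinn2 hdC ψ hψ'
  have key2 : ∑ q : MUB7.Q2 d,
      (((‖star (B q.1 q.2) ⬝ᵥ ψ‖ ^ 2) ^ 2 : ℝ) : ℂ) = 2 := by
    rw [← key]
    apply Finset.sum_congr rfl; intro q _
    have hz : (∑ a, (starRingEnd ℂ) (B q.1 q.2 a) * ψ a) = star (B q.1 q.2) ⬝ᵥ ψ :=
      (hdot _ _).symm
    rw [hz, Complex.mul_conj, ← Complex.sq_norm]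
    push_cast
    ring
  rw [Fintype.sum_prod_type] at key2
  have h1 : ∑ m, ∑ i, (‖star (B m i) ⬝ᵥ ψ‖ ^ 2) ^ 2 = 2 := by
    exact_mod_cast key2
  refine ⟨h1, ?_⟩
  have h2 : ∑ m : Fin (d+1), ((1:ℝ) - ∑ i, (‖star (B m i) ⬝ᵥ ψ‖ ^ 2) ^ 2)
      = (d : ℝ) - 1 := by
    rw [Finset.sum_sub_distrib, h1, Finset.sum_const, Finset.card_univ]
    simp only [Fintype.card_fin, nsmul_eq_mul, mul_one]
    push_cast
    ring
  rw [h2]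
  have hd1 : (d : ℝ) + 1 ≠ 0 := by positivity
  field_simp
  ring
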